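/- Let P₁, Q₁ be probability measures on a measurable space R₁ and P₂, Q₂ probability measures on a measurable space R₂, and let α > 1. If D_α(P₁‖Q₁) ≤ ε₁ and D_α(P₂‖Q₂) ≤ ε₂, then the product measures satisfy D_α(P₁ ⊗ P₂ ‖ Q₁ ⊗ Q₂) ≤ ε₁ + ε₂. (Basic Rényi-differential-privacy composition: if M₁ is (α,ε₁)-RDP and M₂ is (α,ε₂)-RDP, the mechanism (M₁, M₂) with independent randomness is (α, ε₁+ε₂)-RDP.) -/

import Mathlib

open MeasureTheory Real
open scoped Classical ENNReal NNReal

/-- auxiliary: the α-moment integral is 0 or ≥ 1. -/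
lemma renyi_integral_zero_or_one_le {Ω : Type*} [MeasurableSpace Ω] (P Q : Measure Ω)
    [IsProbabilityMeasure P] [IsProbabilityMeasure Q] (h : P ≪ Q) {α : ℝ} (hα : 1 < α) :
    (∫ x, (P.rnDeriv Q x).toReal ^ α ∂Q) = 0 ∨ 1 ≤ ∫ x, (P.rnDeriv Q x).toReal ^ α ∂Q := by
  set f := P.rnDeriv Q
  have hαpos : (0:ℝ) < α := lt_trans one_pos hα
  have hfm : Measurable f := Measure.measurable_rnDeriv _ _
  -- lintegral bound via Hölder
  have hpq : α.HolderConjugate (α / (α - 1)) := Real.HolderConjugate.conjExponent hα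
  have hJ : (1:ℝ≥0∞) ≤ ∫⁻ x, f x ^ α ∂Q := by
    have h1 : ∫⁻ x, f x ∂Q = 1 := by
      rw [Measure.lintegral_rnDeriv h]; simp
    have hH := ENNReal.lintegral_mul_le_Lp_mul_Lq Q hpq hfm.aemeasurable
      (aemeasurable_const (b := (1:ℝ≥0∞)))
    simp only [Pi.mul_apply, mul_one, h1] at hH
    have hone : ∫⁻ _x, (1:ℝ≥0∞) ^ (α / (α - 1)) ∂Q = 1 := by simp
    rw [hone, ENNReal.one_rpow, mul_one] at hH
    -- hH : 1 ≤ (∫⁻ f^α)^(1/α)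
    by_contra hcon
    push_neg at hcon
    exact absurd hH (ENNReal.rpow_lt_one hcon (by positivity)).not_ge
  have hptw : ∀ x, (f x).toReal ^ α = ((f x) ^ α).toReal := fun x =>
    ENNReal.toReal_rpow _ _
  have hfin : ∀ᵐ x ∂Q, f x ^ α ≠ ∞ := by
    filter_upwards [Measure.rnDeriv_lt_top P Q] with x hx
    exact (ENNReal.rpow_lt_top_of_nonneg hαpos.le hx.ne).ne
  by_cases hJtop : ∫⁻ x, f x ^ α ∂Q = ∞
  · left
    have : ¬ Integrable (fun x => (f x).toReal ^ α) Q := by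
      simp_rw [hptw]
      rw [integrable_toReal_iff (hfm.pow_const α).aemeasurable hfin]
      simpa using hJtop
    exact integral_undef this
  · right
    have : ∫ x, (f x).toReal ^ α ∂Q = (∫⁻ x, f x ^ α ∂Q).toReal := by
      simp_rw [hptw]
      exact integral_toReal (hfm.pow_const α).aemeasurable
        (hfin.mono fun x hx => hx.lt_top)
    rw [this]
    rw [show (1:ℝ) = (1:ℝ≥0∞).toReal by simp]
    exact ENNReal.toReal_mono hJtop hJ

lemma rnDeriv_prod_ae' {Ω₁ Ω₂ : Type*} [MeasurableSpace Ω₁] [MeasurableSpace Ω₂]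
    (P₁ Q₁ : Measure Ω₁) (P₂ Q₂ : Measure Ω₂)
    [IsProbabilityMeasure P₁] [IsProbabilityMeasure Q₁]
    [IsProbabilityMeasure P₂] [IsProbabilityMeasure Q₂]
    (h1 : P₁ ≪ Q₁) (h2 : P₂ ≪ Q₂) :
    (P₁.prod P₂).rnDeriv (Q₁.prod Q₂) =ᵐ[Q₁.prod Q₂]
      fun z => P₁.rnDeriv Q₁ z.1 * P₂.rnDeriv Q₂ z.2 := by
  have hg : Measurable fun z : Ω₁ × Ω₂ => P₁.rnDeriv Q₁ z.1 * P₂.rnDeriv Q₂ z.2 :=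
    ((Measure.measurable_rnDeriv _ _).comp measurable_fst).mul
      ((Measure.measurable_rnDeriv _ _).comp measurable_snd)
  have h₀ : P₁.prod P₂ =
      (Q₁.prod Q₂).withDensity fun z => P₁.rnDeriv Q₁ z.1 * P₂.rnDeriv Q₂ z.2 := by
    have h := Measure.prod_eq (μ := Q₁.withDensity (P₁.rnDeriv Q₁))
      (ν := Q₂.withDensity (P₂.rnDeriv Q₂))
      (μν := (Q₁.prod Q₂).withDensity fun z => P₁.rnDeriv Q₁ z.1 * P₂.rnDeriv Q₂ z.2)
      (fun s t hs ht => by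
        rw [withDensity_apply _ (hs.prod ht), ← Measure.prod_restrict,
          lintegral_prod_mul (Measure.measurable_rnDeriv _ _).aemeasurable
            (Measure.measurable_rnDeriv _ _).aemeasurable,
          withDensity_apply _ hs, withDensity_apply _ ht])
    rw [Measure.withDensity_rnDeriv_eq _ _ h1, Measure.withDensity_rnDeriv_eq _ _ h2] at h
    exact h
  exact (Measure.eq_rnDeriv hg Measure.MutuallySingular.zero_left
    (by rw [zero_add]; exact h₀)).symm


/-- The Rényi divergence of order `α` between two measures:
`D_α(P‖Q) = (α−1)⁻¹ · log ∫ (dP/dQ)^α dQ` when `P ≪ Q`, and `⊤` otherwise. -/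
noncomputable def renyiDiv {Ω : Type*} [MeasurableSpace Ω] (α : ℝ) (P Q : Measure Ω) : EReal :=
  if P ≪ Q then
    (((α - 1)⁻¹ * Real.log (∫ x, (P.rnDeriv Q x).toReal ^ α ∂Q) : ℝ) : EReal)
  else ⊤

/-- basic RDP composition: if `D_α(P₁‖Q₁) ≤ ε₁` and `D_α(P₂‖Q₂) ≤ ε₂`
for `α > 1`, then `D_α(P₁ ⊗ P₂ ‖ Q₁ ⊗ Q₂) ≤ ε₁ + ε₂`. -/
theorem renyiDiv_prod_le {Ω₁ Ω₂ : Type*} [MeasurableSpace Ω₁] [MeasurableSpace Ω₂]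
    (P₁ Q₁ : Measure Ω₁) (P₂ Q₂ : Measure Ω₂)
    [IsProbabilityMeasure P₁] [IsProbabilityMeasure Q₁]
    [IsProbabilityMeasure P₂] [IsProbabilityMeasure Q₂]
    (α ε₁ ε₂ : ℝ) (hα : 1 < α)
    (h₁ : renyiDiv α P₁ Q₁ ≤ (ε₁ : EReal))
    (h₂ : renyiDiv α P₂ Q₂ ≤ (ε₂ : EReal)) :
    renyiDiv α (P₁.prod P₂) (Q₁.prod Q₂) ≤ ((ε₁ + ε₂ : ℝ) : EReal) := by
  by_cases hac1 : P₁ ≪ Q₁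
  swap
  · rw [renyiDiv, if_neg hac1] at h₁
    exact absurd h₁ (not_le.mpr (EReal.coe_lt_top ε₁))
  by_cases hac2 : P₂ ≪ Q₂
  swap
  · rw [renyiDiv, if_neg hac2] at h₂
    exact absurd h₂ (not_le.mpr (EReal.coe_lt_top ε₂))
  rw [renyiDiv, if_pos hac1, EReal.coe_le_coe_iff] at h₁
  rw [renyiDiv, if_pos hac2, EReal.coe_le_coe_iff] at h₂
  have hac : P₁.prod P₂ ≪ Q₁.prod Q₂ := hac1.prod hac2
  rw [renyiDiv, if_pos hac, EReal.coe_le_coe_iff]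
  set I₁ := ∫ x, (P₁.rnDeriv Q₁ x).toReal ^ α ∂Q₁ with hI₁def
  set I₂ := ∫ x, (P₂.rnDeriv Q₂ x).toReal ^ α ∂Q₂ with hI₂def
  have hprod : ∫ z, ((P₁.prod P₂).rnDeriv (Q₁.prod Q₂) z).toReal ^ α ∂(Q₁.prod Q₂)
      = I₁ * I₂ := by
    have hae := rnDeriv_prod_ae' P₁ Q₁ P₂ Q₂ hac1 hac2
    rw [integral_congr_ae ((hae.mono fun z hz => by dsimp only; rw [hz]) :
      (fun z => (((P₁.prod P₂).rnDeriv (Q₁.prod Q₂)) z).toReal ^ α) =ᵐ[Q₁.prod Q₂]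
      (fun z => ((P₁.rnDeriv Q₁ z.1 * P₂.rnDeriv Q₂ z.2)).toReal ^ α))]
    have hptw : ∀ z : Ω₁ × Ω₂, ((P₁.rnDeriv Q₁ z.1 * P₂.rnDeriv Q₂ z.2).toReal) ^ α
        = (P₁.rnDeriv Q₁ z.1).toReal ^ α * (P₂.rnDeriv Q₂ z.2).toReal ^ α := fun z => by
      rw [ENNReal.toReal_mul, Real.mul_rpow ENNReal.toReal_nonneg ENNReal.toReal_nonneg]
    simp_rw [hptw]
    rw [hI₁def, hI₂def]
    exact integral_prod_mul (L := ℝ) (fun x => (P₁.rnDeriv Q₁ x).toReal ^ α)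
      (fun y => (P₂.rnDeriv Q₂ y).toReal ^ α)
  rw [hprod]
  have hd1 := renyi_integral_zero_or_one_le P₁ Q₁ hac1 hα
  have hd2 := renyi_integral_zero_or_one_le P₂ Q₂ hac2 hα
  rw [← hI₁def] at hd1
  rw [← hI₂def] at hd2
  have hlog1 : 0 ≤ Real.log I₁ := by
    rcases hd1 with h | h
    · simp [h]
    · exact Real.log_nonneg h
  have hlog2 : 0 ≤ Real.log I₂ := by
    rcases hd2 with h | h
    · simp [h]
    · exact Real.log_nonneg h
  have hmul : Real.log (I₁ * I₂) ≤ Real.log I₁ + Real.log I₂ := by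
    rcases hd1 with h | h1
    · simp only [h, zero_mul, Real.log_zero]
      positivity
    rcases hd2 with h | h2
    · simp only [h, mul_zero, Real.log_zero]
      positivity
    · rw [Real.log_mul (by linarith) (by linarith)]
  have hinv : (0:ℝ) ≤ (α - 1)⁻¹ := by
    have : (0:ℝ) < α - 1 := by linarith
    positivity
  calc (α - 1)⁻¹ * Real.log (I₁ * I₂)
      ≤ (α - 1)⁻¹ * (Real.log I₁ + Real.log I₂) :=
        mul_le_mul_of_nonneg_left hmul hinv
    _ = (α - 1)⁻¹ * Real.log I₁ + (α - 1)⁻¹ * Real.log I₂ := mul_add _ _ _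
    _ ≤ ε₁ + ε₂ := add_le_add h₁ h₂
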